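/- Let c ≥ 0, λ > 0, and let J : ℝ → ℝ be continuous, strictly positive, and 2π-periodic. Then for all z ∈ ℝ, (ρ_c(λ)/(2λ)) · min_{x∈ℝ} J(x) ≤ R_λ(z) ≤ (ρ_c(λ)/(2λ)) · max_{x∈ℝ} J(x). Moreover, if J is not a constant function, both inequalities are strict for every z. -/

import Mathlib

/-- The Heaviside step function. -/
noncomputable def Heav (z : ℝ) : ℝ := if z < 0 then 0 else 1

/-- The synaptic profile `r_λ(z)`, given by formula (3.10); on `(-π, π) \ {0}` (the only
values relevant to the integrals below) it equals
`(1/2) e^{-(λz + (c/2)H(z))} [H(z) + (e^{2πλ + c/2} - 1)⁻¹]`. -/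
noncomputable def rTheta (c lam z : ℝ) : ℝ :=
  (1 / 2) * Real.exp (-(lam * z + (c / 2) * Heav z)) *
    (Heav z + (Real.exp (2 * Real.pi * lam + c / 2) - 1)⁻¹)

/-- `R_λ(z) = ∫_{-π}^{π} J(z - y) r_λ(y) dy` (formula (3.13)). -/
noncomputable def RTheta (J : ℝ → ℝ) (c lam z : ℝ) : ℝ :=
  ∫ y in (-Real.pi)..Real.pi, J (z - y) * rTheta c lam y

/-- `h(θ) = 1 - cos θ + β(1 + cos θ)`. -/
noncomputable def hTheta (β θ : ℝ) : ℝ := 1 - Real.cos θ + β * (1 + Real.cos θ)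

/-- `w(θ) = 1 + cos θ`. -/
noncomputable def wTheta (θ : ℝ) : ℝ := 1 + Real.cos θ

/-- `ρ_c(λ) = (e^{2πλ} - 1)/(e^{2πλ + c/2} - 1)`. -/
noncomputable def rhoC (c lam : ℝ) : ℝ :=
  (Real.exp (2 * Real.pi * lam) - 1) / (Real.exp (2 * Real.pi * lam + c / 2) - 1)

/-- `f_{c,β}(λ) = (1 - 4βλ²)/(2λ ρ_c(λ))`. -/
noncomputable def fCB (c β lam : ℝ) : ℝ := (1 - 4 * β * lam ^ 2) / (2 * lam * rhoC c lam)

section UlbAux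
open Real MeasureTheory intervalIntegral Set


lemma Kpos {c lam : ℝ} (hc : 0 ≤ c) (hlam : 0 < lam) :
    0 < Real.exp (2 * Real.pi * lam + c / 2) - 1 := by
  have hπ := Real.pi_pos
  have h : (0:ℝ) < 2 * Real.pi * lam + c / 2 := by positivity
  have h2 : Real.exp 0 < Real.exp (2 * Real.pi * lam + c / 2) := Real.exp_lt_exp.mpr h
  rw [Real.exp_zero] at h2; linarith

lemma rTheta_pos {c lam : ℝ} (hc : 0 ≤ c) (hlam : 0 < lam) (y : ℝ) :
    0 < rTheta c lam y := by
  have h1 := Kpos hc hlam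
  have hinv : 0 < (Real.exp (2 * Real.pi * lam + c / 2) - 1)⁻¹ := inv_pos.mpr h1
  unfold rTheta Heav
  split_ifs with h
  · rw [zero_add]
    exact mul_pos (by positivity) hinv
  · exact mul_pos (by positivity) (by linarith)

lemma rTheta_eq_neg {c lam y : ℝ} (hy : y < 0) :
    rTheta c lam y = (1/2) * (Real.exp (2 * Real.pi * lam + c / 2) - 1)⁻¹ *
      Real.exp ((-lam) * y) := by
  unfold rTheta Heav
  rw [if_pos hy]
  ring_nf

lemma rTheta_eq_pos {c lam y : ℝ} (hy : ¬ y < 0) :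
    rTheta c lam y = (1/2) * Real.exp (-(c/2)) *
      (1 + (Real.exp (2 * Real.pi * lam + c / 2) - 1)⁻¹) * Real.exp ((-lam) * y) := by
  unfold rTheta Heav
  rw [if_neg hy, show -(lam * y + c / 2 * 1) = -(c/2) + (-lam) * y by ring, Real.exp_add]
  ring


lemma integral_exp_mul (a b k : ℝ) (hk : k ≠ 0) :
    ∫ y in a..b, Real.exp (k * y) = (Real.exp (k * b) - Real.exp (k * a)) / k := by
  have h : ∀ x ∈ Set.uIcc a b, HasDerivAt (fun y => Real.exp (k * y) / k)
      (Real.exp (k * x)) x := by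
    intro x _
    have h1 : HasDerivAt (fun y => k * y) k x := by
      simpa using (hasDerivAt_id x).const_mul k
    have h2 := (h1.exp).div_const k
    simpa [mul_comm, mul_div_assoc, mul_div_cancel_left₀ _ hk] using h2
  rw [intervalIntegral.integral_eq_sub_of_hasDerivAt h
    ((Real.continuous_exp.comp (continuous_const.mul continuous_id)).intervalIntegrable a b)]
  ring

lemma ae_ne_zero : ∀ᵐ x : ℝ, x ≠ 0 := by
  rw [ae_iff]
  simp only [ne_eq, not_not]
  have h : {x : ℝ | x = 0} = {0} := by ext; simp
  rw [h]
  exact measure_singleton 0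

lemma rTheta_ae_left (c lam : ℝ) :
    (fun y : ℝ => (1/2) * (Real.exp (2 * Real.pi * lam + c / 2) - 1)⁻¹ *
      Real.exp ((-lam) * y)) =ᵐ[volume.restrict (Set.uIoc (-Real.pi) 0)] rTheta c lam := by
  have hpi : (-Real.pi : ℝ) ≤ 0 := by linarith [Real.pi_pos]
  filter_upwards [ae_restrict_of_ae ae_ne_zero, ae_restrict_mem measurableSet_uIoc]
    with x hx hmem
  rw [Set.uIoc_of_le hpi] at hmem
  exact (rTheta_eq_neg (lt_of_le_of_ne hmem.2 hx)).symm

lemma rTheta_intInt_left (c lam : ℝ) :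
    IntervalIntegrable (rTheta c lam) volume (-Real.pi) 0 := by
  have hcont : Continuous fun y : ℝ => (1/2) * (Real.exp (2 * Real.pi * lam + c / 2) - 1)⁻¹ *
      Real.exp ((-lam) * y) := by continuity
  exact (hcont.intervalIntegrable _ _).congr_ae (rTheta_ae_left c lam)

lemma rTheta_intInt_right (c lam : ℝ) :
    IntervalIntegrable (rTheta c lam) volume 0 Real.pi := by
  have hcont : Continuous fun y : ℝ => (1/2) * Real.exp (-(c/2)) *
      (1 + (Real.exp (2 * Real.pi * lam + c / 2) - 1)⁻¹) * Real.exp ((-lam) * y) := by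
    continuity
  refine (hcont.intervalIntegrable _ _).congr_ae ?_
  have hpi : (0:ℝ) ≤ Real.pi := Real.pi_pos.le
  filter_upwards [ae_restrict_mem measurableSet_uIoc] with x hmem
  rw [Set.uIoc_of_le hpi] at hmem
  exact (rTheta_eq_pos (not_lt.mpr hmem.1.le)).symm

lemma rTheta_intInt (c lam : ℝ) :
    IntervalIntegrable (rTheta c lam) volume (-Real.pi) Real.pi :=
  (rTheta_intInt_left c lam).trans (rTheta_intInt_right c lam)


lemma integral_rTheta {c lam : ℝ} (hc : 0 ≤ c) (hlam : 0 < lam) :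
    ∫ y in (-Real.pi)..Real.pi, rTheta c lam y = rhoC c lam / (2 * lam) := by
  have hlam' : lam ≠ 0 := hlam.ne'
  have hnlam : (-lam) ≠ 0 := by simpa using hlam'
  have hsplit := intervalIntegral.integral_add_adjacent_intervals
    (rTheta_intInt_left c lam) (rTheta_intInt_right c lam)
  rw [← hsplit]
  set K := (Real.exp (2 * Real.pi * lam + c / 2) - 1)⁻¹ with hK
  have hL : ∫ y in (-Real.pi)..0, rTheta c lam y =
      (1/2) * K * ((Real.exp ((-lam) * 0) - Real.exp ((-lam) * (-Real.pi))) / (-lam)) := by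
    rw [intervalIntegral.integral_congr_ae (ae_imp_of_ae_restrict (rTheta_ae_left c lam).symm),
      intervalIntegral.integral_const_mul, integral_exp_mul _ _ _ hnlam]
  have hR : ∫ y in (0:ℝ)..Real.pi, rTheta c lam y =
      (1/2) * Real.exp (-(c/2)) * (1 + K) *
        ((Real.exp ((-lam) * Real.pi) - Real.exp ((-lam) * 0)) / (-lam)) := by
    have hae : ∀ᵐ x : ℝ, x ∈ Set.uIoc 0 Real.pi → rTheta c lam x =
        (1/2) * Real.exp (-(c/2)) * (1 + K) * Real.exp ((-lam) * x) := by
      filter_upwards with x hmem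
      rw [Set.uIoc_of_le Real.pi_pos.le] at hmem
      exact rTheta_eq_pos (not_lt.mpr hmem.1.le)
    rw [intervalIntegral.integral_congr_ae hae,
      intervalIntegral.integral_const_mul, integral_exp_mul _ _ _ hnlam]
  rw [hL, hR]
  -- now pure algebra
  have hE2 : Real.exp (2 * Real.pi * lam) = Real.exp (lam * Real.pi) * Real.exp (lam * Real.pi) := by
    rw [← Real.exp_add]; ring_nf
  have hEA : Real.exp (2 * Real.pi * lam + c / 2) =
      Real.exp (lam * Real.pi) * Real.exp (lam * Real.pi) * Real.exp (c / 2) := by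
    rw [← Real.exp_add, ← Real.exp_add]; ring_nf
  have h1 : Real.exp ((-lam) * 0) = 1 := by norm_num
  have h2 : Real.exp ((-lam) * (-Real.pi)) = Real.exp (lam * Real.pi) := by ring_nf
  have h3 : Real.exp ((-lam) * Real.pi) = (Real.exp (lam * Real.pi))⁻¹ := by
    rw [← Real.exp_neg]; ring_nf
  have h4 : Real.exp (-(c/2)) = (Real.exp (c/2))⁻¹ := by rw [← Real.exp_neg]
  have hEApos : 0 < Real.exp (lam * Real.pi) * Real.exp (lam * Real.pi) * Real.exp (c/2) - 1 := by
    have := Kpos hc hlam; rw [hEA] at this; linarith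
  rw [rhoC, hK, hE2, hEA, h1, h2, h3, h4]
  have hEpos := Real.exp_pos (lam * Real.pi)
  have hApos := Real.exp_pos (c / 2)
  generalize Real.exp (lam * Real.pi) = E at *
  generalize Real.exp (c / 2) = A at *
  have hne : E ^ 2 * A - 1 ≠ 0 := by rw [sq]; exact hEApos.ne'
  field_simp
  ring


lemma mul_rTheta_intInt {c lam : ℝ} (g : ℝ → ℝ) (hg : Continuous g) (a b : ℝ)
    (hab : Set.uIcc a b ⊆ Set.uIcc (-Real.pi) Real.pi) :
    IntervalIntegrable (fun y => g y * rTheta c lam y) volume a b :=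
  ((rTheta_intInt c lam).mono_set hab).continuousOn_mul hg.continuousOn

lemma int_le {c lam : ℝ} (hc : 0 ≤ c) (hlam : 0 < lam) (g : ℝ → ℝ) (hg : Continuous g)
    (b : ℝ) (hb : ∀ y, g y ≤ b) :
    ∫ y in (-Real.pi)..Real.pi, g y * rTheta c lam y ≤
      b * ∫ y in (-Real.pi)..Real.pi, rTheta c lam y := by
  rw [← intervalIntegral.integral_const_mul]
  refine intervalIntegral.integral_mono_on (by linarith [Real.pi_pos])
    (mul_rTheta_intInt g hg _ _ subset_rfl) ((rTheta_intInt c lam).const_mul b) ?_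
  intro x _
  exact mul_le_mul_of_nonneg_right (hb x) (rTheta_pos hc hlam x).le

lemma int_ge {c lam : ℝ} (hc : 0 ≤ c) (hlam : 0 < lam) (g : ℝ → ℝ) (hg : Continuous g)
    (b : ℝ) (hb : ∀ y, b ≤ g y) :
    b * ∫ y in (-Real.pi)..Real.pi, rTheta c lam y ≤
      ∫ y in (-Real.pi)..Real.pi, g y * rTheta c lam y := by
  rw [← intervalIntegral.integral_const_mul]
  refine intervalIntegral.integral_mono_on (by linarith [Real.pi_pos])
    ((rTheta_intInt c lam).const_mul b) (mul_rTheta_intInt g hg _ _ subset_rfl) ?_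
  intro x _
  exact mul_le_mul_of_nonneg_right (hb x) (rTheta_pos hc hlam x).le

lemma int_pos {c lam : ℝ} (hc : 0 ≤ c) (hlam : 0 < lam) (g : ℝ → ℝ) (hg : Continuous g)
    (hg0 : ∀ y, 0 ≤ g y) (y0 : ℝ) (hy0 : y0 ∈ Set.Ioo (-Real.pi) Real.pi)
    (hgy0 : 0 < g y0) :
    0 < ∫ y in (-Real.pi)..Real.pi, g y * rTheta c lam y := by
  have hπ := Real.pi_pos
  -- find a small interval around y0 inside (-π, π) where g > 0
  have hUopen : IsOpen (Set.Ioo (-Real.pi) Real.pi ∩ {y | 0 < g y}) :=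
    isOpen_Ioo.inter (isOpen_lt continuous_const hg)
  have hy0U : y0 ∈ Set.Ioo (-Real.pi) Real.pi ∩ {y | 0 < g y} := ⟨hy0, hgy0⟩
  obtain ⟨ε, hε, hball⟩ := Metric.isOpen_iff.mp hUopen y0 hy0U
  set δ := ε / 2 with hδ
  have hδpos : 0 < δ := by positivity
  have hsub : Set.Icc (y0 - δ) (y0 + δ) ⊆ Set.Ioo (-Real.pi) Real.pi ∩ {y | 0 < g y} := by
    intro x hx
    apply hball
    rw [Metric.mem_ball, Real.dist_eq, abs_lt]
    constructor <;> [linarith [hx.1]; linarith [hx.2]]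
  have hmem1 : y0 - δ ∈ Set.Icc (y0 - δ) (y0 + δ) := by
    constructor <;> linarith
  have hmem2 : y0 + δ ∈ Set.Icc (y0 - δ) (y0 + δ) := by
    constructor <;> linarith
  have hca : -Real.pi ≤ y0 - δ := (hsub hmem1).1.1.le
  have hbd : y0 + δ ≤ Real.pi := (hsub hmem2).1.2.le
  have huicc : Set.uIcc (y0 - δ) (y0 + δ) ⊆ Set.uIcc (-Real.pi) Real.pi := by
    rw [Set.uIcc_of_le (by linarith), Set.uIcc_of_le (by linarith)]
    exact Set.Icc_subset_Icc hca hbd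
  have hmid : 0 < ∫ y in (y0 - δ)..(y0 + δ), g y * rTheta c lam y := by
    refine intervalIntegral.intervalIntegral_pos_of_pos_on
      (mul_rTheta_intInt g hg _ _ huicc) ?_ (by linarith)
    intro x hx
    exact mul_pos ((hsub (Set.Ioo_subset_Icc_self hx)).2) (rTheta_pos hc hlam x)
  refine lt_of_lt_of_le hmid ?_
  refine intervalIntegral.integral_mono_interval hca (by linarith) hbd ?_
    (mul_rTheta_intInt g hg _ _ subset_rfl)
  filter_upwards with x
  exact mul_nonneg (hg0 x) (rTheta_pos hc hlam x).le

end UlbAux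

open Real MeasureTheory intervalIntegral Set in
/-- Lemma 5.2 (lemma `ulb`): for all `z`,
`(ρ_c(λ)/(2λ)) min J ≤ R_λ(z) ≤ (ρ_c(λ)/(2λ)) max J`,
with strict inequalities when `J` is not constant. -/
theorem rotating_waves_stmt_14 (c lam : ℝ) (hc : 0 ≤ c) (hlam : 0 < lam)
    (J : ℝ → ℝ) (hJcont : Continuous J) (hJpos : ∀ x : ℝ, 0 < J x)
    (hJper : ∀ x : ℝ, J (x + 2 * Real.pi) = J x) :
    (∀ z : ℝ,
      rhoC c lam / (2 * lam) * sInf (Set.range J) ≤ RTheta J c lam z ∧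
      RTheta J c lam z ≤ rhoC c lam / (2 * lam) * sSup (Set.range J)) ∧
    ((¬ ∃ k : ℝ, ∀ x : ℝ, J x = k) → ∀ z : ℝ,
      rhoC c lam / (2 * lam) * sInf (Set.range J) < RTheta J c lam z ∧
      RTheta J c lam z < rhoC c lam / (2 * lam) * sSup (Set.range J)) := by
  have hπ := Real.pi_pos
  have h2π : (0:ℝ) < 2 * Real.pi := by linarith
  have hJ : Function.Periodic J (2 * Real.pi) := hJper
  -- global min and max
  obtain ⟨a, -, hamin⟩ := isCompact_Icc.exists_isMinOn (s := Set.Icc (0:ℝ) (2*Real.pi))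
    ⟨0, by constructor <;> linarith⟩ hJcont.continuousOn
  obtain ⟨b, -, hbmax⟩ := isCompact_Icc.exists_isMaxOn (s := Set.Icc (0:ℝ) (2*Real.pi))
    ⟨0, by constructor <;> linarith⟩ hJcont.continuousOn
  have hmin : ∀ x, J a ≤ J x := by
    intro x
    obtain ⟨y, hy, hxy⟩ := hJ.exists_mem_Ico₀ h2π x
    rw [hxy]; exact hamin (Set.Ico_subset_Icc_self hy)
  have hmax : ∀ x, J x ≤ J b := by
    intro x
    obtain ⟨y, hy, hxy⟩ := hJ.exists_mem_Ico₀ h2π x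
    rw [hxy]; exact hbmax (Set.Ico_subset_Icc_self hy)
  have hmI : sInf (Set.range J) = J a :=
    le_antisymm (csInf_le ⟨J a, by rintro _ ⟨x, rfl⟩; exact hmin x⟩ ⟨a, rfl⟩)
      (le_csInf ⟨J a, a, rfl⟩ (by rintro _ ⟨x, rfl⟩; exact hmin x))
  have hMI : sSup (Set.range J) = J b :=
    le_antisymm (csSup_le ⟨J a, a, rfl⟩ (by rintro _ ⟨x, rfl⟩; exact hmax x))
      (le_csSup ⟨J b, by rintro _ ⟨x, rfl⟩; exact hmax x⟩ ⟨b, rfl⟩)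
  have hI := integral_rTheta hc hlam
  constructor
  · intro z
    have hgc : Continuous fun y => J (z - y) :=
      hJcont.comp (continuous_const.sub continuous_id)
    constructor
    · rw [hmI, mul_comm, RTheta, ← hI]
      exact int_ge hc hlam _ hgc _ (fun y => hmin _)
    · rw [hMI, mul_comm (rhoC c lam / (2*lam)), RTheta, ← hI]
      exact int_le hc hlam _ hgc _ (fun y => hmax _)
  · intro hnc z
    have hgc : Continuous fun y => J (z - y) :=
      hJcont.comp (continuous_const.sub continuous_id)
    have hgper : Function.Periodic (fun y => J (z - y)) (2 * Real.pi) := by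
      intro y
      simp only
      rw [show z - (y + 2 * Real.pi) = z - y - 2 * Real.pi by ring]
      have := hJper (z - y - 2 * Real.pi)
      rw [show z - y - 2 * Real.pi + 2 * Real.pi = z - y by ring] at this
      exact this.symm
    -- if a continuous 2π-periodic function is constant k on Ioo (-π) π, it's constant
    have hconst : ∀ k : ℝ, (∀ y ∈ Set.Ioo (-Real.pi) Real.pi, J (z - y) = k) →
        ∀ x, J x = k := by
      intro k hk x
      have hclosed : IsClosed {y : ℝ | J (z - y) = k} :=
        isClosed_eq hgc continuous_const
      have hsub : Set.Icc (-Real.pi) Real.pi ⊆ {y : ℝ | J (z - y) = k} := by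
        rw [← closure_Ioo (by linarith : (-Real.pi : ℝ) ≠ Real.pi)]
        exact hclosed.closure_subset_iff.mpr hk
      obtain ⟨y', hy', hxy⟩ := hgper.exists_mem_Ico h2π (z - x) (-Real.pi)
      have h1 : J (z - (z - x)) = J x := by ring_nf
      rw [← h1, hxy]
      exact hsub ⟨hy'.1, by linarith [hy'.2]⟩
    constructor
    · -- strict lower bound
      obtain ⟨y0, hy0, hy0gt⟩ : ∃ y0 ∈ Set.Ioo (-Real.pi) Real.pi, J a < J (z - y0) := by
        by_contra hcon
        push_neg at hcon
        exact hnc ⟨J a, hconst (J a) fun y hy => le_antisymm (hcon y hy) (hmin _)⟩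
      have hpos := int_pos hc hlam (fun y => J (z - y) - J a)
        (hgc.sub continuous_const) (fun y => sub_nonneg.mpr (hmin _)) y0 hy0
        (sub_pos.mpr hy0gt)
      have heq : ∫ y in (-Real.pi)..Real.pi, (J (z - y) - J a) * rTheta c lam y =
          RTheta J c lam z - J a * ∫ y in (-Real.pi)..Real.pi, rTheta c lam y := by
        simp_rw [sub_mul]
        rw [intervalIntegral.integral_sub (mul_rTheta_intInt _ hgc _ _ subset_rfl)
          ((rTheta_intInt c lam).const_mul (J a)),
          intervalIntegral.integral_const_mul]
        rfl
      rw [heq, hI] at hpos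
      rw [hmI, mul_comm]
      linarith
    · obtain ⟨y0, hy0, hy0lt⟩ : ∃ y0 ∈ Set.Ioo (-Real.pi) Real.pi, J (z - y0) < J b := by
        by_contra hcon
        push_neg at hcon
        exact hnc ⟨J b, hconst (J b) fun y hy => le_antisymm (hmax _) (hcon y hy)⟩
      have hpos := int_pos hc hlam (fun y => J b - J (z - y))
        (continuous_const.sub hgc) (fun y => sub_nonneg.mpr (hmax _)) y0 hy0
        (sub_pos.mpr hy0lt)
      have heq : ∫ y in (-Real.pi)..Real.pi, (J b - J (z - y)) * rTheta c lam y =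
          J b * (∫ y in (-Real.pi)..Real.pi, rTheta c lam y) - RTheta J c lam z := by
        simp_rw [sub_mul]
        rw [intervalIntegral.integral_sub ((rTheta_intInt c lam).const_mul (J b))
          (mul_rTheta_intInt _ hgc _ _ subset_rfl),
          intervalIntegral.integral_const_mul]
        rfl
      rw [heq, hI] at hpos
      rw [hMI, mul_comm]
      linarith
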